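/- Let N be a finite set of players, v : 𝒫(N) → ℝ a coalition value function, and define the synergy w(R) = Σ_{T ⊆ R} (−1)^{|R| − |T|} v(T) for each R ⊆ N. Then for every player i ∈ N, the equal division of synergies equals the classical Shapley value: Σ_{S ⊆ N, i ∈ S} w(S) / |S| = Σ_{S ⊆ N \ {i}} (|S|! · (|N| − |S| − 1)! / |N|!) · (v(S ∪ {i}) − v(S)). -/

import Mathlib

open Finset

lemma keyA (m : ℕ) : ∀ (t : ℕ), 1 ≤ t →
    ∑ k ∈ Finset.range (m+1), (-1:ℝ)^k * (m.choose k) / (t+k) =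
      (t-1).factorial * m.factorial / (t+m).factorial := by
  induction m with
  | zero =>
    intro t ht
    simp only [zero_add, Nat.factorial_zero, Finset.range_one, Finset.sum_singleton, pow_zero, Nat.choose_zero_right,
      Nat.cast_one, Nat.cast_zero, add_zero, one_mul, Nat.factorial_one, mul_one]
    have h : t.factorial = t * (t-1).factorial := by
      conv_lhs => rw [show t = (t-1)+1 by omega]
      rw [Nat.factorial_succ]
      congr 1; omega
    rw [h]
    have ht' : (0:ℝ) < t := by positivity
    have : ((t-1).factorial : ℝ) ≠ 0 := by positivity
    push_cast
    field_simp
  | succ m ih =>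
    intro t ht
    have hrec : ∑ k ∈ Finset.range (m+2), (-1:ℝ)^k * ((m+1).choose k) / (t+k)
        = (∑ k ∈ Finset.range (m+1), (-1:ℝ)^k * (m.choose k) / (t+k))
          - ∑ k ∈ Finset.range (m+1), (-1:ℝ)^k * (m.choose k) / ((t:ℝ)+1+k) := by
      rw [Finset.sum_range_succ' (fun k => (-1:ℝ)^k * ((m+1).choose k) / (t+k))]
      have e1 : ∀ k ∈ Finset.range (m+1), (-1:ℝ)^(k+1) * ((m+1).choose (k+1)) / (t+(k+1:ℕ))
          = -((-1:ℝ)^k * (m.choose k) / ((t:ℝ)+1+k)) + ((-1:ℝ)^(k+1) * (m.choose (k+1)) / (t+(k+1:ℕ))) := by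
        intro k _
        rw [Nat.choose_succ_succ]
        push_cast
        ring
      rw [Finset.sum_congr rfl e1, Finset.sum_add_distrib]
      have e3 : ∑ k ∈ Finset.range (m+1), (-1:ℝ)^(k+1) * (m.choose (k+1)) / (t+(k+1:ℕ))
          = (∑ k ∈ Finset.range (m+2), (-1:ℝ)^k * (m.choose k) / (t+k)) - 1/t := by
        rw [Finset.sum_range_succ' (fun k => (-1:ℝ)^k * (m.choose k) / (t+k))]
        simp
      rw [e3]
      have e4 : ∑ k ∈ Finset.range (m+2), (-1:ℝ)^k * (m.choose k) / (t+k)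
          = ∑ k ∈ Finset.range (m+1), (-1:ℝ)^k * (m.choose k) / (t+k) := by
        rw [Finset.sum_range_succ]
        simp [Nat.choose_succ_self]
      rw [e4, Finset.sum_neg_distrib]
      simp
      ring
    rw [hrec, ih t ht]
    have ih2 := ih (t+1) (by omega)
    rw [show t+1-1 = t from rfl] at ih2
    push_cast at ih2
    rw [ih2]
    have h2 : (t+(m+1)).factorial = (t+m+1) * (t+m).factorial := by
      rw [show t+(m+1) = (t+m)+1 by omega, Nat.factorial_succ]
    have h3 : (t+1+m).factorial = (t+m+1) * (t+m).factorial := by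
      rw [show t+1+m = (t+m)+1 by omega, Nat.factorial_succ]
    have h4 : t.factorial = t * (t-1).factorial := by
      conv_lhs => rw [show t = (t-1)+1 by omega]
      rw [Nat.factorial_succ]; congr 1; omega
    have h5 : (m+1).factorial = (m+1) * m.factorial := Nat.factorial_succ m
    rw [h2, h3, h4, h5]
    have p1 : (0:ℝ) < (t+m).factorial := by positivity
    have p2 : (0:ℝ) < (t:ℝ)+m+1 := by positivity
    have p3 : (0:ℝ) < t := by positivity
    have p4 : (0:ℝ) < (t-1).factorial := by positivity
    push_cast
    field_simp
    ring

-- sum over supersets of A of a function of the card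
lemma sumSup {N : Type*} [Fintype N] [DecidableEq N] (A : Finset N) (F : ℕ → ℝ) :
    ∑ S ∈ univ.filter (fun S => A ⊆ S), F S.card
      = ∑ k ∈ Finset.range (Fintype.card N - A.card + 1),
          ((Fintype.card N - A.card).choose k : ℝ) * F (A.card + k) := by
  have h1 : ∑ S ∈ univ.filter (fun S => A ⊆ S), F S.card
      = ∑ U ∈ (Aᶜ).powerset, F (A.card + U.card) := by
    apply Finset.sum_nbij' (fun S => S \ A) (fun U => A ∪ U)
    · intro S hS
      simp only [Finset.mem_filter, Finset.mem_univ, true_and] at hS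
      rw [Finset.mem_powerset]
      intro x hx
      simp only [Finset.mem_sdiff] at hx
      simp [hx.2]
    · intro U hU
      simp [Finset.subset_union_left]
    · intro S hS
      simp only [Finset.mem_filter, Finset.mem_univ, true_and] at hS
      exact Finset.union_sdiff_of_subset hS
    · intro U hU
      rw [Finset.mem_powerset] at hU
      apply Finset.union_sdiff_cancel_left
      rw [Finset.disjoint_left]
      intro x hx hxU
      have := hU hxU
      simp at this
      exact this hx
    · intro S hS
      simp only [Finset.mem_filter, Finset.mem_univ, true_and] at hS
      congr 1
      rw [Finset.card_sdiff_of_subset hS]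
      have := Finset.card_le_card hS
      omega
  rw [h1, Finset.powerset_card_biUnion, Finset.sum_biUnion (fun _ _ _ _ hij => Finset.pairwise_disjoint_powersetCard _ hij), Finset.card_compl]
  apply Finset.sum_congr rfl
  intro k hk
  have hconst : ∀ U ∈ Finset.powersetCard k Aᶜ, F (A.card + U.card) = F (A.card + k) := by
    intro U hU
    rw [(Finset.mem_powersetCard.mp hU).2]
  rw [Finset.sum_congr rfl hconst, Finset.sum_const, Finset.card_powersetCard,
    Finset.card_compl, nsmul_eq_mul]

lemma coefIn {N : Type*} [Fintype N] [DecidableEq N] {i : N} {T : Finset N} (hT : i ∈ T) :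
    ∑ S ∈ univ.filter (fun S => insert i T ⊆ S), (-1:ℝ)^(S.card - T.card) / S.card
      = (T.card - 1).factorial * (Fintype.card N - T.card).factorial
          / (Fintype.card N).factorial := by
  rw [Finset.insert_eq_self.mpr hT]
  rw [sumSup T (fun c => (-1:ℝ)^(c - T.card) / c)]
  have ht1 : 1 ≤ T.card := Finset.card_pos.mpr ⟨i, hT⟩
  have htn : T.card ≤ Fintype.card N := Finset.card_le_univ T
  have := keyA (Fintype.card N - T.card) T.card ht1
  rw [show T.card + (Fintype.card N - T.card) = Fintype.card N by omega] at this
  rw [← this]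
  apply Finset.sum_congr rfl
  intro k _
  rw [show T.card + k - T.card = k by omega]
  push_cast
  ring

lemma coefOut {N : Type*} [Fintype N] [DecidableEq N] {i : N} {T : Finset N} (hT : i ∉ T) :
    ∑ S ∈ univ.filter (fun S => insert i T ⊆ S), (-1:ℝ)^(S.card - T.card) / S.card
      = -(T.card.factorial * (Fintype.card N - T.card - 1).factorial
          / (Fintype.card N).factorial) := by
  rw [sumSup (insert i T) (fun c => (-1:ℝ)^(c - T.card) / c)]
  rw [Finset.card_insert_of_notMem hT]
  have htn : T.card + 1 ≤ Fintype.card N := by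
    have : T ⊂ univ := Finset.ssubset_univ_iff.mpr (by
      intro h; exact hT (h ▸ Finset.mem_univ i))
    have := Finset.card_lt_card this
    simpa [Finset.card_univ] using this
  have hk := keyA (Fintype.card N - T.card - 1) (T.card + 1) (by omega)
  rw [show T.card + 1 + (Fintype.card N - T.card - 1) = Fintype.card N by omega] at hk
  rw [show T.card + 1 - 1 = T.card from rfl] at hk
  rw [show Fintype.card N - (T.card + 1) = Fintype.card N - T.card - 1 by omega]
  rw [← hk, ← Finset.sum_neg_distrib]
  apply Finset.sum_congr rfl
  intro k _
  rw [show T.card + 1 + k - T.card = k + 1 by omega, pow_succ]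
  push_cast
  ring


/-- **Shapley value as equal division of synergies.** Let `N` be a finite set of players,
`v : 𝒫(N) → ℝ` a coalition value function, and `w(R) = Σ_{T ⊆ R} (−1)^(|R|−|T|) v(T)` the
synergy of coalition `R`. Then for every player `i`,
`Σ_{S ⊆ N, i ∈ S} w(S)/|S| = Σ_{S ⊆ N \ {i}} (|S|! (|N|−|S|−1)! / |N|!) (v(S ∪ {i}) − v(S))`. -/
theorem shapley_from_synergy {N : Type*} [Fintype N] [DecidableEq N]
    (v w : Finset N → ℝ)
    (hw : ∀ R : Finset N, w R = ∑ T ∈ R.powerset, (-1 : ℝ) ^ (R.card - T.card) * v T)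
    (i : N) :
    ∑ S ∈ univ.filter (fun S : Finset N => i ∈ S), w S / S.card =
      ∑ S ∈ ((univ : Finset N).erase i).powerset,
        ((S.card.factorial * (Fintype.card N - S.card - 1).factorial : ℝ) /
            (Fintype.card N).factorial) * (v (insert i S) - v S) := by
  classical
  set n := Fintype.card N with hn
  -- Step 1: LHS as a double sum with indicator
  have step1 : ∑ S ∈ univ.filter (fun S : Finset N => i ∈ S), w S / S.card
      = ∑ S ∈ (univ : Finset (Finset N)), ∑ T ∈ (univ : Finset (Finset N)),
          (if insert i T ⊆ S then (-1:ℝ)^(S.card - T.card) * v T / S.card else 0) := by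
    rw [Finset.sum_filter]
    apply Finset.sum_congr rfl
    intro S _
    by_cases hS : i ∈ S
    · simp only [hS, if_true]
      rw [hw S, Finset.sum_div]
      have hps : S.powerset = univ.filter (fun T => T ⊆ S) := by
        ext T; simp
      rw [hps, Finset.sum_filter]
      apply Finset.sum_congr rfl
      intro T _
      have hiff : (T ⊆ S) ↔ (insert i T ⊆ S) := by
        rw [Finset.insert_subset_iff]
        exact ⟨fun h => ⟨hS, h⟩, fun h => h.2⟩
      exact if_congr hiff rfl rfl
    · simp only [hS, if_false]
      symm
      apply Finset.sum_eq_zero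
      intro T _
      rw [if_neg]
      intro h
      exact hS (h (Finset.mem_insert_self i T))
  rw [step1, Finset.sum_comm]
  -- Step 2: inner sum factors out v T
  have step2 : ∀ T : Finset N, ∑ S ∈ (univ : Finset (Finset N)),
      (if insert i T ⊆ S then (-1:ℝ)^(S.card - T.card) * v T / S.card else 0)
      = (∑ S ∈ univ.filter (fun S => insert i T ⊆ S), (-1:ℝ)^(S.card - T.card) / S.card) * v T := by
    intro T
    rw [← Finset.sum_filter, Finset.sum_mul]
    apply Finset.sum_congr rfl
    intro S _
    ring
  rw [Finset.sum_congr rfl (fun T _ => step2 T)]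
  -- Step 3: split the T-sum by membership of i
  rw [← Finset.sum_filter_add_sum_filter_not (univ : Finset (Finset N)) (fun T => i ∈ T)]
  -- Step 4: evaluate coefficients
  have e1 : ∑ T ∈ univ.filter (fun T : Finset N => i ∈ T),
      (∑ S ∈ univ.filter (fun S => insert i T ⊆ S), (-1:ℝ)^(S.card - T.card) / S.card) * v T
      = ∑ T ∈ univ.filter (fun T : Finset N => i ∈ T),
        ((T.card - 1).factorial * (n - T.card).factorial / n.factorial : ℝ) * v T := by
    apply Finset.sum_congr rfl
    intro T hT
    rw [coefIn (Finset.mem_filter.mp hT).2]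
  have e2 : ∑ T ∈ univ.filter (fun T : Finset N => ¬ i ∈ T),
      (∑ S ∈ univ.filter (fun S => insert i T ⊆ S), (-1:ℝ)^(S.card - T.card) / S.card) * v T
      = ∑ T ∈ univ.filter (fun T : Finset N => ¬ i ∈ T),
        (-(T.card.factorial * (n - T.card - 1).factorial / n.factorial : ℝ)) * v T := by
    apply Finset.sum_congr rfl
    intro T hT
    rw [coefOut (Finset.mem_filter.mp hT).2]
  rw [e1, e2]
  -- Step 5: rewrite RHS
  have hdom : ((univ : Finset N).erase i).powerset
      = univ.filter (fun S : Finset N => ¬ i ∈ S) := by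
    ext S
    simp [Finset.subset_erase]
  rw [hdom]
  rw [show (∑ S ∈ univ.filter (fun S : Finset N => ¬ i ∈ S),
      ((S.card.factorial * (n - S.card - 1).factorial : ℝ) / n.factorial)
        * (v (insert i S) - v S))
    = (∑ S ∈ univ.filter (fun S : Finset N => ¬ i ∈ S),
        ((S.card.factorial * (n - S.card - 1).factorial : ℝ) / n.factorial) * v (insert i S))
      - ∑ S ∈ univ.filter (fun S : Finset N => ¬ i ∈ S),
        ((S.card.factorial * (n - S.card - 1).factorial : ℝ) / n.factorial) * v S from by
    rw [← Finset.sum_sub_distrib]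
    exact Finset.sum_congr rfl fun S _ => by ring]
  -- reindex the first RHS sum via insert
  have e3 : ∑ S ∈ univ.filter (fun S : Finset N => ¬ i ∈ S),
      ((S.card.factorial * (n - S.card - 1).factorial : ℝ) / n.factorial) * v (insert i S)
      = ∑ T ∈ univ.filter (fun T : Finset N => i ∈ T),
        ((T.card - 1).factorial * (n - T.card).factorial / n.factorial : ℝ) * v T := by
    apply Finset.sum_nbij' (fun S => insert i S) (fun T => T.erase i)
    · intro S hS
      simp
    · intro T hT
      simp
    · intro S hS
      simp only [Finset.mem_filter, Finset.mem_univ, true_and] at hS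
      exact Finset.erase_insert hS
    · intro T hT
      simp only [Finset.mem_filter, Finset.mem_univ, true_and] at hT
      exact Finset.insert_erase hT
    · intro S hS
      simp only [Finset.mem_filter, Finset.mem_univ, true_and] at hS
      rw [Finset.card_insert_of_notMem hS]
      have h1 : S.card + 1 - 1 = S.card := rfl
      have h2 : n - (S.card + 1) = n - S.card - 1 := by omega
      rw [h1, h2]
  rw [e3]
  rw [sub_eq_add_neg, ← Finset.sum_neg_distrib]
  congr 1
  exact Finset.sum_congr rfl fun T _ => by ring
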